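/- In the Loidreau–Overbeck setting, assume rk_F(λ_(n−t−k)(E)_a⃗) = t. Then there exist invertible matrices W^(i) ∈ GF(q)^(n_i×n_i), i = 1, …, ℓ, such that λ_(n−t−k)(E)_a⃗ · diag(W^(1), …, W^(ℓ)) has exactly t nonzero columns, and these t columns are linearly independent over F. -/

import Mathlib

namespace Stmt4

/-- `genNorm σ a i = σ^(i-1)(a) ⋯ σ(a) · a`, the generalized power function `N_i(a)`. -/
def genNorm {F : Type} [Field F] (σ : F ≃+* F) (a : F) : ℕ → F
  | 0 => 1
  | i + 1 => (⇑σ)^[i] a * genNorm σ a i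

/-- Generalized operator `D_a^i(b) = σ^i(b) · N_i(a)` for `i ∈ ℕ`. -/
def opev {F : Type} [Field F] (σ : F ≃+* F) (a b : F) (i : ℕ) : F :=
  (⇑σ)^[i] b * genNorm σ a i

/-- `b` is σ-conjugate to `a`, i.e. `b = σ(c)·a·c⁻¹` for some nonzero `c`. -/
def SConj {F : Type} [Field F] (σ : F ≃+* F) (a b : F) : Prop :=
  ∃ c : F, c ≠ 0 ∧ b = σ c * a * c⁻¹

/-- σ-generalized Moore matrix `λ_d(x)_a⃗` w.r.t. the length partition `nn`:
its row `r` applies `D_{a_i}^r` entrywise to the `i`-th block of `x`. -/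
def moore {F : Type} [Field F] (σ : F ≃+* F) {ℓ : ℕ} (nn : Fin ℓ → ℕ) (aa : Fin ℓ → F)
    (d : ℕ) (x : (Σ i : Fin ℓ, Fin (nn i)) → F) :
    Matrix (Fin d) (Σ i : Fin ℓ, Fin (nn i)) F :=
  Matrix.of fun r p => opev σ (aa p.1) (x p) (r : ℕ)

/-- `λ_d(X)_a⃗` for a matrix `X`: the stack of `λ_d(x_j)_a⃗` over the rows of `X`. -/
def mooreMat {F : Type} [Field F] (σ : F ≃+* F) {ℓ : ℕ} (nn : Fin ℓ → ℕ) (aa : Fin ℓ → F)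
    {s : ℕ} (d : ℕ) (X : Matrix (Fin s) (Σ i : Fin ℓ, Fin (nn i)) F) :
    Matrix (Fin s × Fin d) (Σ i : Fin ℓ, Fin (nn i)) F :=
  Matrix.of fun r p => opev σ (aa p.1) (X r.1 p) (r.2 : ℕ)

/-- `rk_q` of a vector: the `K`-dimension of the `K`-span of its entries. -/
noncomputable def rkq (K : Type) [Field K] {F : Type} [Field F] [Algebra K F] {ι : Type}
    (v : ι → F) : ℕ :=
  Module.finrank K (Submodule.span K (Set.range v))

/-- `rk_q` of a matrix: the `K`-dimension of the `K`-span of its columns. -/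
noncomputable def rkqMat (K : Type) [Field K] {F : Type} [Field F] [Algebra K F]
    {s : ℕ} {ι : Type} (X : Matrix (Fin s) ι F) : ℕ :=
  Module.finrank K (Submodule.span K (Set.range fun j : ι => fun r : Fin s => X r j))

/-- Sum-rank weight of a blockwise vector. -/
noncomputable def wtV (K : Type) [Field K] {F : Type} [Field F] [Algebra K F] {ℓ : ℕ}
    (nn : Fin ℓ → ℕ) (x : (Σ i : Fin ℓ, Fin (nn i)) → F) : ℕ :=
  ∑ i, rkq K fun μ : Fin (nn i) => x ⟨i, μ⟩

/-- Sum-rank weight of a blockwise matrix. -/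
noncomputable def wtM (K : Type) [Field K] {F : Type} [Field F] [Algebra K F] {s ℓ : ℕ}
    (nn : Fin ℓ → ℕ) (X : Matrix (Fin s) (Σ i : Fin ℓ, Fin (nn i)) F) : ℕ :=
  ∑ i, rkqMat K (Matrix.of fun (r : Fin s) (μ : Fin (nn i)) => X r ⟨i, μ⟩)

/-- Codeword `C(M) = M · λ_k(β)_a⃗` of the `s`-interleaved linearized Reed–Solomon code. -/
def codeword {F : Type} [Field F] (σ : F ≃+* F) {ℓ : ℕ} (nn : Fin ℓ → ℕ) (aa : Fin ℓ → F)
    (β : (Σ i : Fin ℓ, Fin (nn i)) → F) {s : ℕ} (k : ℕ) (M : Matrix (Fin s) (Fin k) F) :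
    Matrix (Fin s) (Σ i : Fin ℓ, Fin (nn i)) F :=
  M * moore σ nn aa k β

/-- Loidreau–Overbeck decoding matrix: the stack of `λ_{n-t-1}(β)_a⃗` and
`λ_{n-t-k}(r_j)_a⃗` for the rows `r_j` of `R`. -/
def LOmat {F : Type} [Field F] (σ : F ≃+* F) {ℓ : ℕ} (nn : Fin ℓ → ℕ) (aa : Fin ℓ → F)
    (β : (Σ i : Fin ℓ, Fin (nn i)) → F) {s : ℕ}
    (R : Matrix (Fin s) (Σ i : Fin ℓ, Fin (nn i)) F) (n t k : ℕ) :
    Matrix (Fin (n - t - 1) ⊕ Fin s × Fin (n - t - k)) (Σ i : Fin ℓ, Fin (nn i)) F :=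
  Matrix.of fun r p =>
    match r with
    | Sum.inl u => opev σ (aa p.1) (β p) (u : ℕ)
    | Sum.inr ju => opev σ (aa p.1) (R ju.1 p) (ju.2 : ℕ)

/-- Any subspace of `Fin n → K` admits a basis of the full space whose first
`finrank p` vectors lie in `p`. -/
lemma exists_basis_ker {K : Type} [Field K] {n : ℕ} (p : Submodule K (Fin n → K)) :
    ∃ b : Module.Basis (Fin n) K (Fin n → K),
      ∀ j : Fin n, (j : ℕ) < Module.finrank K p → b j ∈ p := by
  classical
  obtain ⟨q, hq⟩ := p.exists_isCompl
  have hsum : Module.finrank K p + Module.finrank K q = n := by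
    rw [Submodule.finrank_add_eq_of_isCompl hq, Module.finrank_fin_fun]
  let bb := ((Module.finBasis K p).prod (Module.finBasis K q)).map
      (Submodule.prodEquivOfIsCompl p q hq)
  let e : (Fin (Module.finrank K ↥p) ⊕ Fin (Module.finrank K ↥q)) ≃ Fin n :=
    finSumFinEquiv.trans (finCongr hsum)
  refine ⟨bb.reindex e, ?_⟩
  intro j hj
  rw [Module.Basis.reindex_apply]
  rcases hx : e.symm j with x | y
  · show (((Module.finBasis K ↥p).prod (Module.finBasis K ↥q)).map
        (Submodule.prodEquivOfIsCompl p q hq)) (Sum.inl x) ∈ p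
    rw [Module.Basis.map_apply, Submodule.coe_prodEquivOfIsCompl']
    simp only [Module.Basis.prod_apply_inl_fst, Module.Basis.prod_apply_inl_snd,
      Submodule.coe_zero, add_zero]
    exact SetLike.coe_mem _
  · exfalso
    have hj' : j = e (Sum.inr y) := (Equiv.symm_apply_eq e).mp hx
    have : (j : ℕ) = Module.finrank K ↥p + (y : ℕ) := by
      rw [hj']
      simp [e, finSumFinEquiv_apply_right]
    omega

/-- The `m`-fold iterate of a ring automorphism is (the underlying map of) a ring hom. -/
lemma exists_iterHom {F : Type} [Field F] (σ : F ≃+* F) (m : ℕ) :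
    ∃ g : F →+* F, ∀ x, g x = (⇑σ)^[m] x := by
  induction m with
  | zero => exact ⟨RingHom.id F, fun _ => rfl⟩
  | succ m ih =>
    obtain ⟨g, hg⟩ := ih
    exact ⟨g.comp (σ : F →+* F), fun x => by
      simp [RingHom.comp_apply, hg, Function.iterate_succ_apply]⟩

/-- If `rk_F(λ_{n−t−k}(E)_a⃗) = t`, then there are invertible matrices
`W^(i) ∈ GF(q)^{n_i×n_i}` such that `λ_{n−t−k}(E)_a⃗ · diag(W^(1),…,W^(ℓ))` has exactly
`t` nonzero columns, and these `t` columns are linearly independent over `F`. -/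
theorem LO_nonzero_columns
    {K F : Type} [Field K] [Field F] [Algebra K F] [Fintype K] [Fintype F]
    (σ : F ≃+* F)
    (hfix : ∀ x : F, σ x = x ↔ x ∈ Set.range (algebraMap K F))
    {ℓ : ℕ} (hℓ : 1 ≤ ℓ) (nn : Fin ℓ → ℕ) (aa : Fin ℓ → F)
    (ha0 : ∀ i, aa i ≠ 0)
    (haconj : ∀ i j : Fin ℓ, i ≠ j → ¬ SConj σ (aa i) (aa j))
    (β : (Σ i : Fin ℓ, Fin (nn i)) → F)
    (hβ : ∀ i, LinearIndependent K fun μ : Fin (nn i) => β ⟨i, μ⟩)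
    {s : ℕ} (hs : 1 ≤ s) {k n t : ℕ} (hn : n = ∑ i, nn i)
    (hk : 1 ≤ k) (hkn : k ≤ n)
    (M : Matrix (Fin s) (Fin k) F)
    (E R : Matrix (Fin s) (Σ i : Fin ℓ, Fin (nn i)) F)
    (hR : R = codeword σ nn aa β k M + E)
    (ht : wtM K nn E = t) (htnk : t ≤ n - k)
    (hrk : (mooreMat σ nn aa (n - t - k) E).rank = t)
    :
    ∃ (W : (i : Fin ℓ) → Matrix (Fin (nn i)) (Fin (nn i)) K)
      (P : Matrix (Fin s × Fin (n - t - k)) (Σ i : Fin ℓ, Fin (nn i)) F),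
      (∀ i, IsUnit (W i)) ∧
      (∀ (r : Fin s × Fin (n - t - k)) (p : Σ i : Fin ℓ, Fin (nn i)),
          P r p = ∑ ν : Fin (nn p.1),
            mooreMat σ nn aa (n - t - k) E r ⟨p.1, ν⟩ * algebraMap K F (W p.1 ν p.2)) ∧
      {p : Σ i : Fin ℓ, Fin (nn i) | (fun r => P r p) ≠ 0}.ncard = t ∧
      LinearIndependent F
        fun q : {p : Σ i : Fin ℓ, Fin (nn i) | (fun r => P r p) ≠ 0} =>
          fun r => P r q.1 := by
  classical
  -- block column maps over K
  set colE : (i : Fin ℓ) → Fin (nn i) → (Fin s → F) :=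
    fun i ν => fun r => E r ⟨i, ν⟩ with hcolE
  set φ : (i : Fin ℓ) → ((Fin (nn i) → K) →ₗ[K] (Fin s → F)) :=
    fun i => Fintype.linearCombination K (colE i) with hφdef
  choose b hb using fun i => exists_basis_ker (K := K) (LinearMap.ker (φ i))
  set W : (i : Fin ℓ) → Matrix (Fin (nn i)) (Fin (nn i)) K :=
    fun i => (Pi.basisFun K (Fin (nn i))).toMatrix (b i) with hWdef
  have hWcol : ∀ (i : Fin ℓ) (j ν : Fin (nn i)), W i ν j = b i j ν := by
    intro i j ν
    simp [hWdef, Module.Basis.toMatrix_apply, Pi.basisFun_repr]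
  have hWunit : ∀ i, IsUnit (W i) :=
    fun i => @isUnit_of_invertible _ _ _
      ((Pi.basisFun K (Fin (nn i))).invertibleToMatrix (b i))
  set f : K →+* F := algebraMap K F with hfdef
  set D : Matrix (Σ i : Fin ℓ, Fin (nn i)) (Σ i : Fin ℓ, Fin (nn i)) F :=
    Matrix.blockDiagonal' (fun i => (W i).map f) with hDdef
  have hDunit : IsUnit D := by
    have h1 : ∀ i, IsUnit ((W i).map f) := by
      intro i
      have := (hWunit i).map f.mapMatrix
      rwa [RingHom.mapMatrix_apply] at this
    choose u hu using h1
    have hpi : IsUnit (fun i => (W i).map f :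
        ∀ i : Fin ℓ, Matrix (Fin (nn i)) (Fin (nn i)) F) := by
      refine ⟨⟨fun i => (W i).map f, fun i => ((u i)⁻¹ : _), ?_, ?_⟩, rfl⟩
      · funext i
        show (W i).map ⇑f * ((u i)⁻¹ : _) = 1
        rw [← hu i, Units.mul_inv]
      · funext i
        show ((u i)⁻¹ : _) * (W i).map ⇑f = 1
        rw [← hu i, Units.inv_mul]
    have := hpi.map (Matrix.blockDiagonal'RingHom (fun i : Fin ℓ => Fin (nn i)) F)
    exact this
  set A := mooreMat σ nn aa (n - t - k) E with hA
  set P := A * D with hP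
  -- the explicit formula for P
  have hPdef : ∀ (r : Fin s × Fin (n - t - k)) (p : Σ i : Fin ℓ, Fin (nn i)),
      P r p = ∑ ν : Fin (nn p.1), A r ⟨p.1, ν⟩ * f (W p.1 ν p.2) := by
    intro r p
    obtain ⟨i, j⟩ := p
    have : P r ⟨i, j⟩ = ∑ p' : Σ i : Fin ℓ, Fin (nn i), A r p' * D p' ⟨i, j⟩ :=
      Matrix.mul_apply
    have hsum : ∑ a : Fin ℓ, ∑ ν : Fin (nn a), A r ⟨a, ν⟩ * D ⟨a, ν⟩ ⟨i, j⟩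
        = ∑ ν : Fin (nn i), A r ⟨i, ν⟩ * D ⟨i, ν⟩ ⟨i, j⟩ :=
      Finset.sum_eq_single i
        (fun i' _ hne => Finset.sum_eq_zero fun ν _ => by
          rw [hDdef, Matrix.blockDiagonal'_apply_ne _ _ _ hne, mul_zero])
        (fun h => absurd (Finset.mem_univ i) h)
    rw [this, ← Finset.univ_sigma_univ, Finset.sum_sigma, hsum]
    refine Finset.sum_congr rfl fun ν _ => ?_
    rw [hDdef, Matrix.blockDiagonal'_apply_eq]
    rfl
  -- σ-iterates fix the image of K
  have hfixiter : ∀ (m : ℕ) (x : K), (⇑σ)^[m] (f x) = f x := by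
    intro m x
    induction m with
    | zero => rfl
    | succ m ih => rw [Function.iterate_succ_apply, (hfix (f x)).mpr ⟨x, rfl⟩, ih]
  -- columns coming from kernel vectors vanish
  have hzero : ∀ (i : Fin ℓ) (j : Fin (nn i)), b i j ∈ LinearMap.ker (φ i) →
      (fun r : Fin s × Fin (n - t - k) => P r ⟨i, j⟩) = 0 := by
    intro i j hker
    funext r
    obtain ⟨g, hg⟩ := exists_iterHom σ (r.2 : ℕ)
    have hφ0 : ∀ r1 : Fin s, ∑ ν : Fin (nn i), E r1 ⟨i, ν⟩ * f (b i j ν) = 0 := by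
      intro r1
      have h0 := congrFun (LinearMap.mem_ker.mp hker) r1
      rw [hφdef] at h0
      simp only [Fintype.linearCombination_apply, Finset.sum_apply, Pi.smul_apply,
        hcolE, Algebra.smul_def] at h0
      simpa [mul_comm] using h0
    have hcalc : P r ⟨i, j⟩
        = genNorm σ (aa i) (r.2 : ℕ) * g (∑ ν : Fin (nn i), E r.1 ⟨i, ν⟩ * f (b i j ν)) := by
      rw [hPdef, map_sum, Finset.mul_sum]
      refine Finset.sum_congr rfl fun ν _ => ?_
      rw [hWcol, map_mul, hg, hg]
      have hfb : g (f (b i j ν)) = f (b i j ν) := by rw [hg, hfixiter]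
      rw [hA]
      show opev σ (aa i) (E r.1 ⟨i, ν⟩) (r.2 : ℕ) * f (b i j ν) = _
      rw [hg] at hfb
      rw [hfb, opev]
      ring
    rw [hcalc, hφ0, map_zero, mul_zero]
    rfl
  -- block ranks
  set tB : Fin ℓ → ℕ :=
    fun i => rkqMat K (Matrix.of fun (r : Fin s) (μ : Fin (nn i)) => E r ⟨i, μ⟩) with htBdef
  have htB : ∑ i, tB i = t := ht
  have hrange : ∀ i, Module.finrank K (LinearMap.range (φ i)) = tB i := by
    intro i
    rw [hφdef]
    simp only []
    rw [Fintype.range_linearCombination]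
    rfl
  have hker : ∀ i, Module.finrank K (LinearMap.ker (φ i)) + tB i = nn i := by
    intro i
    have h := LinearMap.finrank_range_add_finrank_ker (φ i)
    rw [hrange i, Module.finrank_fin_fun] at h
    omega
  -- per block, at most tB i columns avoid the kernel
  have hblock : ∀ i, (Finset.univ.filter
      fun j : Fin (nn i) => b i j ∉ LinearMap.ker (φ i)).card ≤ tB i := by
    intro i
    have hle : Module.finrank K (LinearMap.ker (φ i)) ≤ nn i := by
      have := hker i; omega
    have hin : Module.finrank K (LinearMap.ker (φ i)) ≤ (Finset.univ.filter
        fun j : Fin (nn i) => b i j ∈ LinearMap.ker (φ i)).card := by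
      have hcard := Finset.card_le_card_of_injOn
        (f := fun x : Fin (Module.finrank K (LinearMap.ker (φ i))) => Fin.castLE hle x)
        (s := Finset.univ) (t := Finset.univ.filter
          fun j : Fin (nn i) => b i j ∈ LinearMap.ker (φ i))
        (fun x _ => by
          simp only [Finset.mem_coe, Finset.mem_filter, Finset.mem_univ, true_and]
          exact hb i (Fin.castLE hle x) x.2)
        (fun x _ y _ hxy => Fin.castLE_injective hle hxy)
      simpa using hcard
    have hsplit := Finset.card_filter_add_card_filter_not
      (s := (Finset.univ : Finset (Fin (nn i))))
      (p := fun j => b i j ∈ LinearMap.ker (φ i))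
    simp only [Finset.card_univ, Fintype.card_fin] at hsplit
    have := hker i
    omega
  -- global count
  set Tf : Finset (Σ i : Fin ℓ, Fin (nn i)) :=
    Finset.univ.sigma (fun i => Finset.univ.filter
      fun j : Fin (nn i) => b i j ∉ LinearMap.ker (φ i)) with hTfdef
  have hTf : Tf.card ≤ t := by
    rw [hTfdef, Finset.card_sigma]
    calc ∑ i, (Finset.univ.filter
          fun j : Fin (nn i) => b i j ∉ LinearMap.ker (φ i)).card
        ≤ ∑ i, tB i := Finset.sum_le_sum fun i _ => hblock i
      _ = t := htB
  set S : Set (Σ i : Fin ℓ, Fin (nn i)) :=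
    {p | (fun r : Fin s × Fin (n - t - k) => P r p) ≠ 0} with hSdef
  have hSsub : S ⊆ ↑Tf := by
    rintro ⟨i, j⟩ hp
    by_cases hm : b i j ∈ LinearMap.ker (φ i)
    · exact absurd (hzero i j hm) hp
    · have hmem : (⟨i, j⟩ : Σ i : Fin ℓ, Fin (nn i)) ∈ Tf := by
        rw [hTfdef, Finset.mem_sigma]
        exact ⟨Finset.mem_univ _, Finset.mem_filter.mpr ⟨Finset.mem_univ _, hm⟩⟩
      exact hmem
  have hScard : S.ncard ≤ t := by
    have h1 : S.ncard ≤ (↑Tf : Set (Σ i : Fin ℓ, Fin (nn i))).ncard :=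
      Set.ncard_le_ncard hSsub Tf.finite_toSet
    rw [Set.ncard_coe_finset] at h1
    exact h1.trans hTf
  -- rank of P
  have hDdet : IsUnit D.det := (Matrix.isUnit_iff_isUnit_det D).mp hDunit
  have hrankP : P.rank = t := by
    rw [hP, Matrix.rank_mul_eq_left_of_isUnit_det D A hDdet]
    exact hrk
  set colP : (Σ i : Fin ℓ, Fin (nn i)) → (Fin s × Fin (n - t - k) → F) :=
    fun p => fun r => P r p with hcolPdef
  have hcolP : P.transpose = colP := rfl
  have hspanP : Module.finrank F (Submodule.span F (Set.range colP)) = t := by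
    rw [show colP = P.col from rfl, ← Matrix.rank_eq_finrank_span_cols]
    exact hrankP
  have hspan2 : Submodule.span F (colP '' S) = Submodule.span F (Set.range colP) := by
    refine le_antisymm (Submodule.span_mono (Set.image_subset_range _ _)) ?_
    refine Submodule.span_le.mpr fun v hv => ?_
    obtain ⟨p, rfl⟩ := hv
    by_cases hp : p ∈ S
    · exact Submodule.subset_span ⟨p, hp, rfl⟩
    · have h0 : colP p = 0 := not_not.mp hp
      rw [h0]
      exact (Submodule.span F (colP '' S)).zero_mem
  haveI : Fintype S := Fintype.ofFinite S
  set colS : S → (Fin s × Fin (n - t - k) → F) := fun q => colP q.1 with hcolSdef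
  have hr : Set.range colS = colP '' S := by
    rw [show colS = colP ∘ (Subtype.val : S → _) from rfl, Set.range_comp,
      Subtype.range_coe]
  have hfinrk : Set.finrank F (Set.range colS) = t := by
    show Module.finrank F (Submodule.span F (Set.range colS)) = t
    rw [hr, hspan2, hspanP]
  have hcard_ge : t ≤ Fintype.card S := by
    have h1 := finrank_range_le_card (R := F) colS
    rwa [hfinrk] at h1
  have hcardS : Fintype.card S = t := by
    have h1 : Fintype.card S ≤ t := by
      rw [Set.ncard_eq_toFinset_card' S, Set.toFinset_card] at hScard
      exact hScard
    omega
  have hncard : S.ncard = t := by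
    rw [Set.ncard_eq_toFinset_card' S, Set.toFinset_card, hcardS]
  have hindep : LinearIndependent F colS :=
    linearIndependent_iff_card_eq_finrank_span.mpr (by rw [hfinrk, hcardS])
  exact ⟨W, P, hWunit, hPdef, hncard, hindep⟩

end Stmt4
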